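/- Fix d > 0 and α ∈ ℝ. Let N(α, d) be the number of κ > 0 such that there exists a nonzero twice continuously differentiable φ : [−d, d] → ℝ with φ″ = κ² φ on (−d, d) satisfying the symmetric Robin boundary conditions φ′(d) + α φ(d) = 0 and −φ′(−d) + α φ(−d) = 0 (equivalently, N(α,d) is the number of negative eigenvalues of the Robin Laplacian on (−d,d)). Then N(α, d) = 0 if α ≥ 0; N(α, d) = 1 if −1 ≤ α d < 0; and N(α, d) = 2 if α d < −1. -/

import Mathlib

/-- `φ : [−d,d] → ℝ` is a nonzero `C²` eigenfunction of the Robin Laplacian on `(−d,d)`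
with boundary constants `α₁, α₂`, satisfying `φ″ = lam·φ` on `(−d,d)` together with the
Robin boundary conditions `φ′(d) + α₁ φ(d) = 0` and `−φ′(−d) + α₂ φ(−d) = 0`
(one-sided derivatives at the endpoints). -/
def IsRobinEigenfunction (d α₁ α₂ lam : ℝ) (φ : ℝ → ℝ) : Prop :=
  ContDiffOn ℝ 2 φ (Set.Icc (-d) d) ∧
  (∃ u ∈ Set.Icc (-d) d, φ u ≠ 0) ∧
  (∀ u ∈ Set.Ioo (-d) d, deriv (deriv φ) u = lam * φ u) ∧
  derivWithin φ (Set.Icc (-d) d) d + α₁ * φ d = 0 ∧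
  -derivWithin φ (Set.Icc (-d) d) (-d) + α₂ * φ (-d) = 0

/-- The set of `κ > 0` such that `−κ²` is an eigenvalue of the symmetric Robin Laplacian
on `(−d,d)` with constant `α`. -/
def negEigSet (d α : ℝ) : Set ℝ :=
  {κ : ℝ | 0 < κ ∧ ∃ φ : ℝ → ℝ, IsRobinEigenfunction d α α (κ ^ 2) φ}

open Real Set Topology Filter

noncomputable def fE (d α κ : ℝ) : ℝ := κ * Real.sinh (κ * d) + α * Real.cosh (κ * d)
noncomputable def gO (d α κ : ℝ) : ℝ := κ * Real.cosh (κ * d) + α * Real.sinh (κ * d)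

lemma sinh_lt_mul_cosh {x : ℝ} (hx : 0 < x) : Real.sinh x < x * Real.cosh x := by
  set F : ℝ → ℝ := fun y => y * Real.cosh y - Real.sinh y with hF
  have hmono : StrictMonoOn F (Ici 0) := by
    apply strictMonoOn_of_deriv_pos (convex_Ici 0)
    · fun_prop
    · intro y hy
      rw [interior_Ici] at hy
      have hder : HasDerivAt F (y * Real.sinh y) y := by
        have h1 := ((hasDerivAt_id y).mul (Real.hasDerivAt_cosh y)).sub (Real.hasDerivAt_sinh y)
        refine h1.congr_deriv ?_
        simp only [id_eq, one_mul]; ring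
      rw [hder.deriv]
      exact mul_pos hy (Real.sinh_pos_iff.mpr hy)
  have h0 : F 0 < F x := hmono (self_mem_Ici) (le_of_lt hx) hx
  simp [hF] at h0
  linarith

lemma mul_cosh_le_sinh {x : ℝ} (hx : 0 < x) : x * Real.cosh x ≤ (1 + x ^ 2) * Real.sinh x := by
  have h1 : x + 1 ≤ Real.exp x := Real.add_one_le_exp x
  have h2 : Real.cosh x - Real.sinh x = Real.exp (-x) := Real.cosh_sub_sinh x
  have h3 : x < Real.sinh x := self_lt_sinh_iff.mpr hx
  have h4 : Real.exp (-x) * Real.exp x = 1 := by rw [← Real.exp_add]; simp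
  have h5 : (0:ℝ) < Real.exp (-x) := Real.exp_pos _
  have hexp : Real.exp (-x) * (1 + x) ≤ 1 := by nlinarith
  have hub : Real.exp (-x) ≤ 1 - x + x ^ 2 := by nlinarith [pow_pos hx 3]
  nlinarith [mul_le_mul_of_nonneg_left hub hx.le,
    mul_nonneg (sub_nonneg.2 h3.le) (by nlinarith [sq_nonneg (x-1)] : (0:ℝ) ≤ 1 - x + x ^ 2)]

lemma sinh_cosh_mono {a b : ℝ} (hab : a < b) :
    Real.sinh a * Real.cosh b < Real.sinh b * Real.cosh a := by
  have h : Real.sinh (a - b) < 0 := Real.sinh_neg_iff.mpr (by linarith)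
  rw [Real.sinh_sub] at h
  linarith

lemma q_strictMonoOn {d : ℝ} (hd : 0 < d) :
    StrictMonoOn (fun κ => κ * Real.cosh (κ * d) / Real.sinh (κ * d)) (Ioi 0) := by
  apply strictMonoOn_of_deriv_pos (convex_Ioi 0)
  · apply ContinuousOn.div (by fun_prop) (by fun_prop)
    intro x hx
    exact (Real.sinh_pos_iff.mpr (mul_pos hx hd)).ne'
  · intro x hx
    rw [interior_Ioi] at hx
    have hxd : 0 < x * d := mul_pos hx hd
    have hS : Real.sinh (x * d) ≠ 0 := (Real.sinh_pos_iff.mpr hxd).ne'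
    have hlin : HasDerivAt (fun κ : ℝ => κ * d) d x := by
      simpa using (hasDerivAt_id x).mul_const d
    have hN : HasDerivAt (fun κ : ℝ => κ * Real.cosh (κ * d))
        (Real.cosh (x * d) + x * (Real.sinh (x * d) * d)) x := by
      have := (hasDerivAt_id x).mul (hlin.cosh)
      refine this.congr_deriv ?_
      simp only [id_eq, one_mul]
    have hD : HasDerivAt (fun κ : ℝ => Real.sinh (κ * d)) (Real.cosh (x * d) * d) x := hlin.sinh
    have hq : HasDerivAt (fun κ : ℝ => κ * Real.cosh (κ * d) / Real.sinh (κ * d)) _ x := hN.div hD hS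
    rw [hq.deriv]
    apply div_pos
    · have hid : Real.cosh (x * d) ^ 2 - Real.sinh (x * d) ^ 2 = 1 := Real.cosh_sq_sub_sinh_sq _
      have h2 : 2 * (x * d) < Real.sinh (2 * (x * d)) := self_lt_sinh_iff.mpr (by linarith)
      have h3 : Real.sinh (2 * (x * d)) = 2 * (Real.sinh (x * d) * Real.cosh (x * d)) := by
        rw [two_mul, Real.sinh_add]; ring
      nlinarith
    · positivity

lemma fE_pos {d α κ : ℝ} (hd : 0 < d) (hα : 0 ≤ α) (hκ : 0 < κ) : 0 < fE d α κ := by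
  have h1 : 0 < Real.sinh (κ * d) := Real.sinh_pos_iff.mpr (mul_pos hκ hd)
  have h2 : 0 < Real.cosh (κ * d) := Real.cosh_pos _
  have := mul_pos hκ h1
  have := mul_nonneg hα h2.le
  unfold fE; linarith

lemma gO_pos {d α κ : ℝ} (hd : 0 < d) (hαd : -1 ≤ α * d) (hκ : 0 < κ) : 0 < gO d α κ := by
  have hκd : 0 < κ * d := mul_pos hκ hd
  have h1 : 0 < Real.sinh (κ * d) := Real.sinh_pos_iff.mpr hκd
  have h2 : 0 < Real.cosh (κ * d) := Real.cosh_pos _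
  have h3 : Real.sinh (κ * d) < κ * d * Real.cosh (κ * d) := sinh_lt_mul_cosh hκd
  have h4 : 0 ≤ (α * d + 1) * Real.sinh (κ * d) := by
    apply mul_nonneg (by linarith) h1.le
  unfold gO
  nlinarith

lemma fE_zero_unique {d α : ℝ} (hd : 0 < d) {a b : ℝ} (ha : 0 < a) (hb : 0 < b)
    (hfa : fE d α a = 0) (hfb : fE d α b = 0) : a = b := by
  unfold fE at hfa hfb
  rcases lt_trichotomy a b with h | h | h
  · exfalso
    have hm := sinh_cosh_mono (mul_lt_mul_of_pos_right h hd)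
    have h1 : 0 < Real.sinh (b * d) := Real.sinh_pos_iff.mpr (mul_pos hb hd)
    have h2 : 0 < Real.cosh (a * d) := Real.cosh_pos _
    have h3 : 0 < Real.cosh (b * d) := Real.cosh_pos _
    nlinarith [mul_lt_mul_of_pos_left hm ha, mul_pos (mul_pos (sub_pos.2 h) h1) h2]
  · exact h
  · exfalso
    have hm := sinh_cosh_mono (mul_lt_mul_of_pos_right h hd)
    have h1 : 0 < Real.sinh (a * d) := Real.sinh_pos_iff.mpr (mul_pos ha hd)
    have h2 : 0 < Real.cosh (a * d) := Real.cosh_pos _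
    have h3 : 0 < Real.cosh (b * d) := Real.cosh_pos _
    nlinarith [mul_lt_mul_of_pos_left hm hb, mul_pos (mul_pos (sub_pos.2 h) h1) h3]

lemma gO_zero_unique {d α : ℝ} (hd : 0 < d) {a b : ℝ} (ha : 0 < a) (hb : 0 < b)
    (hga : gO d α a = 0) (hgb : gO d α b = 0) : a = b := by
  have key : ∀ c : ℝ, 0 < c → gO d α c = 0 →
      c * Real.cosh (c * d) / Real.sinh (c * d) = -α := by
    intro c hc hgc
    have hS : 0 < Real.sinh (c * d) := Real.sinh_pos_iff.mpr (mul_pos hc hd)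
    rw [div_eq_iff hS.ne']
    unfold gO at hgc
    linarith
  exact (q_strictMonoOn hd).injOn ha hb (by rw [key a ha hga, key b hb hgb])

lemma fE_exists_zero {d α : ℝ} (hd : 0 < d) (hα : α < 0) : ∃ κ, 0 < κ ∧ fE d α κ = 0 := by
  have hcont : Continuous (fE d α) := by unfold fE; fun_prop
  set κ₂ : ℝ := max 1 ((-α) * Real.cosh d / Real.sinh d + 1) with hκ₂def
  have hsd : 0 < Real.sinh d := Real.sinh_pos_iff.mpr hd
  have hcd : 0 < Real.cosh d := Real.cosh_pos d
  have hκ₂1 : (1:ℝ) ≤ κ₂ := le_max_left _ _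
  have hκ₂pos : 0 < κ₂ := by linarith
  set κ₁ : ℝ := min (-α / 2) κ₂ with hκ₁def
  have hκ₁pos : 0 < κ₁ := lt_min (by linarith) hκ₂pos
  have hκ₁₂ : κ₁ ≤ κ₂ := min_le_right _ _
  have hneg : fE d α κ₁ < 0 := by
    have hκ₁α : κ₁ < -α := lt_of_le_of_lt (min_le_left _ _) (by linarith)
    have hκd : 0 < κ₁ * d := mul_pos hκ₁pos hd
    have h1 : 0 < Real.sinh (κ₁ * d) := Real.sinh_pos_iff.mpr hκd
    have h2 : 0 < Real.cosh (κ₁ * d) := Real.cosh_pos _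
    have h3 : Real.sinh (κ₁ * d) < Real.cosh (κ₁ * d) := by
      have := Real.cosh_sub_sinh (κ₁ * d)
      have := Real.exp_pos (-(κ₁ * d))
      linarith
    unfold fE
    nlinarith
  have hpos : 0 < fE d α κ₂ := by
    have hdκ : d ≤ κ₂ * d := le_mul_of_one_le_left hd.le hκ₂1
    have hκd : 0 < κ₂ * d := mul_pos hκ₂pos hd
    have h2 : 0 < Real.cosh (κ₂ * d) := Real.cosh_pos _
    -- tanh monotonicity : sinh d * cosh (κ₂ d) ≤ sinh (κ₂ d) * cosh d
    have hm : Real.sinh d * Real.cosh (κ₂ * d) ≤ Real.sinh (κ₂ * d) * Real.cosh d := by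
      rcases eq_or_lt_of_le hdκ with h | h
      · rw [← h]
      · exact (sinh_cosh_mono h).le
    have hκ₂big : (-α) * Real.cosh d / Real.sinh d < κ₂ := by
      calc (-α) * Real.cosh d / Real.sinh d < (-α) * Real.cosh d / Real.sinh d + 1 := by linarith
      _ ≤ κ₂ := le_max_right _ _
    have hκ₂big' : (-α) * Real.cosh d < κ₂ * Real.sinh d := by
      rw [div_lt_iff₀ hsd] at hκ₂big; linarith
    unfold fE
    nlinarith [mul_le_mul_of_nonneg_left hm hκ₂pos.le, mul_lt_mul_of_pos_right hκ₂big' h2]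
  obtain ⟨c, hc, hfc⟩ := intermediate_value_Icc hκ₁₂ hcont.continuousOn
    (show (0:ℝ) ∈ Icc (fE d α κ₁) (fE d α κ₂) from ⟨hneg.le, hpos.le⟩)
  exact ⟨c, lt_of_lt_of_le hκ₁pos hc.1, hfc⟩

lemma gO_exists_zero {d α : ℝ} (hd : 0 < d) (hαd : α * d < -1) : ∃ κ, 0 < κ ∧ gO d α κ = 0 := by
  have hcont : Continuous (gO d α) := by unfold gO; fun_prop
  have hα : α < 0 := by nlinarith
  set ε : ℝ := -(α * d) - 1 with hεdef
  have hε : 0 < ε := by linarith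
  set κ₂ : ℝ := -α with hκ₂def
  have hκ₂pos : 0 < κ₂ := by linarith
  set κ₁ : ℝ := min (Real.sqrt ε / (2 * d)) κ₂ with hκ₁def
  have hκ₁pos : 0 < κ₁ := lt_min (by positivity) hκ₂pos
  have hκ₁₂ : κ₁ ≤ κ₂ := min_le_right _ _
  have hneg : gO d α κ₁ < 0 := by
    have hκd : 0 < κ₁ * d := mul_pos hκ₁pos hd
    have h1 : 0 < Real.sinh (κ₁ * d) := Real.sinh_pos_iff.mpr hκd
    have h2 : 0 < Real.cosh (κ₁ * d) := Real.cosh_pos _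
    have hsmall : (κ₁ * d) ^ 2 < ε := by
      have h5 : κ₁ ≤ Real.sqrt ε / (2 * d) := min_le_left _ _
      have h6 : κ₁ * d ≤ Real.sqrt ε / 2 := by
        have h6a := mul_le_mul_of_nonneg_right h5 hd.le
        have h6b : Real.sqrt ε / (2 * d) * d = Real.sqrt ε / 2 := by
          field_simp
        linarith
      have h7 : 0 < Real.sqrt ε := Real.sqrt_pos.mpr hε
      have h8 : Real.sqrt ε ^ 2 = ε := Real.sq_sqrt hε.le
      nlinarith
    have hC3 := mul_cosh_le_sinh hκd
    -- κ₁ d cosh ≤ (1+(κ₁d)²) sinh < (-α d) sinh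
    have h9 : (1 + (κ₁ * d) ^ 2) * Real.sinh (κ₁ * d) < (-(α * d)) * Real.sinh (κ₁ * d) := by
      apply mul_lt_mul_of_pos_right _ h1
      linarith
    unfold gO
    nlinarith
  have hpos : 0 < gO d α κ₂ := by
    have hκd : 0 < κ₂ * d := mul_pos hκ₂pos hd
    have h1 : 0 < Real.sinh (κ₂ * d) := Real.sinh_pos_iff.mpr hκd
    have h2 : 0 < Real.cosh (κ₂ * d) := Real.cosh_pos _
    have h3 : Real.sinh (κ₂ * d) < Real.cosh (κ₂ * d) := by
      have := Real.cosh_sub_sinh (κ₂ * d)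
      have := Real.exp_pos (-(κ₂ * d))
      linarith
    unfold gO
    nlinarith
  obtain ⟨c, hc, hfc⟩ := intermediate_value_Icc hκ₁₂ hcont.continuousOn
    (show (0:ℝ) ∈ Icc (gO d α κ₁) (gO d α κ₂) from ⟨hneg.le, hpos.le⟩)
  exact ⟨c, lt_of_lt_of_le hκ₁pos hc.1, hfc⟩

lemma isRobin_of_fE {d α κ : ℝ} (hd : 0 < d) (hκ : 0 < κ) (h : fE d α κ = 0) :
    IsRobinEigenfunction d α α (κ ^ 2) fun u => Real.cosh (κ * u) := by
  have hlin : ∀ u : ℝ, HasDerivAt (fun v : ℝ => κ * v) κ u := fun u => by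
    simpa using (hasDerivAt_id u).const_mul κ
  have hd1 : ∀ u : ℝ, HasDerivAt (fun v => Real.cosh (κ * v)) (Real.sinh (κ * u) * κ) u :=
    fun u => (hlin u).cosh
  have hderiv : deriv (fun v => Real.cosh (κ * v)) = fun u => Real.sinh (κ * u) * κ :=
    funext fun u => (hd1 u).deriv
  have hmemd : d ∈ Icc (-d) d := ⟨by linarith, le_refl d⟩
  have hmemnd : -d ∈ Icc (-d) d := ⟨le_refl _, by linarith⟩
  have hUD := uniqueDiffOn_Icc (show -d < d by linarith)
  unfold fE at h
  refine ⟨?_, ⟨0, ⟨by linarith, by linarith⟩, by simp⟩, ?_, ?_, ?_⟩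
  · exact (Real.contDiff_cosh.comp ((contDiff_const).mul contDiff_id)).of_le le_top |>.contDiffOn
  · intro u hu
    rw [hderiv]
    have h2 : HasDerivAt (fun u => Real.sinh (κ * u) * κ) (Real.cosh (κ * u) * κ * κ) u :=
      ((hlin u).sinh).mul_const κ
    rw [h2.deriv]; ring
  · rw [((hd1 d).differentiableAt).derivWithin (hUD d hmemd), (hd1 d).deriv]
    linarith
  · rw [((hd1 (-d)).differentiableAt).derivWithin (hUD (-d) hmemnd), (hd1 (-d)).deriv]
    have e1 : κ * -d = -(κ * d) := by ring
    simp only [e1, Real.sinh_neg, Real.cosh_neg]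
    linarith

lemma isRobin_of_gO {d α κ : ℝ} (hd : 0 < d) (hκ : 0 < κ) (h : gO d α κ = 0) :
    IsRobinEigenfunction d α α (κ ^ 2) fun u => Real.sinh (κ * u) := by
  have hlin : ∀ u : ℝ, HasDerivAt (fun v : ℝ => κ * v) κ u := fun u => by
    simpa using (hasDerivAt_id u).const_mul κ
  have hd1 : ∀ u : ℝ, HasDerivAt (fun v => Real.sinh (κ * v)) (Real.cosh (κ * u) * κ) u :=
    fun u => (hlin u).sinh
  have hderiv : deriv (fun v => Real.sinh (κ * v)) = fun u => Real.cosh (κ * u) * κ :=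
    funext fun u => (hd1 u).deriv
  have hmemd : d ∈ Icc (-d) d := ⟨by linarith, le_refl d⟩
  have hmemnd : -d ∈ Icc (-d) d := ⟨le_refl _, by linarith⟩
  have hUD := uniqueDiffOn_Icc (show -d < d by linarith)
  unfold gO at h
  refine ⟨?_, ⟨d, hmemd, (Real.sinh_pos_iff.mpr (mul_pos hκ hd)).ne'⟩, ?_, ?_, ?_⟩
  · exact (Real.contDiff_sinh.comp ((contDiff_const).mul contDiff_id)).of_le le_top |>.contDiffOn
  · intro u hu
    rw [hderiv]
    have h2 : HasDerivAt (fun u => Real.cosh (κ * u) * κ) (Real.sinh (κ * u) * κ * κ) u :=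
      ((hlin u).cosh).mul_const κ
    rw [h2.deriv]; ring
  · rw [((hd1 d).differentiableAt).derivWithin (hUD d hmemd), (hd1 d).deriv]
    linarith
  · rw [((hd1 (-d)).differentiableAt).derivWithin (hUD (-d) hmemnd), (hd1 (-d)).deriv]
    have e1 : κ * -d = -(κ * d) := by ring
    simp only [e1, Real.sinh_neg, Real.cosh_neg]
    linarith

lemma const_of_hasDerivAt_zero {f : ℝ → ℝ} {a b : ℝ}
    (h : ∀ z ∈ Ioo a b, HasDerivAt f 0 z) :
    ∀ x ∈ Ioo a b, ∀ y ∈ Ioo a b, f x = f y := by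
  have key : ∀ x ∈ Ioo a b, ∀ y ∈ Ioo a b, x ≤ y → f y = f x := by
    intro x hx y hy hxy
    have hcont : ContinuousOn f (Icc x y) := by
      intro z hz
      exact ((h z ⟨lt_of_lt_of_le hx.1 hz.1, lt_of_le_of_lt hz.2 hy.2⟩).continuousAt).continuousWithinAt
    have hderiv : ∀ z ∈ Ico x y, HasDerivWithinAt f 0 (Ici z) z := by
      intro z hz
      exact (h z ⟨lt_of_lt_of_le hx.1 hz.1, lt_trans hz.2 hy.2⟩).hasDerivWithinAt
    exact constant_of_has_deriv_right_zero hcont hderiv y (right_mem_Icc.2 hxy)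
  intro x hx y hy
  rcases le_total x y with hxy | hxy
  · exact (key x hx y hy hxy).symm
  · exact key y hy x hx hxy

lemma fE_or_gO_of_robin {d α κ : ℝ} (hd : 0 < d) (hκ : 0 < κ) {φ : ℝ → ℝ}
    (hφ : IsRobinEigenfunction d α α (κ ^ 2) φ) : fE d α κ = 0 ∨ gO d α κ = 0 := by
  obtain ⟨hC2, ⟨u₀, hu₀, hu₀ne⟩, hode, hbc1, hbc2⟩ := hφ
  have hdd : -d < d := by linarith
  have hUD := uniqueDiffOn_Icc hdd
  -- differentiability on the open interval
  have hreg : ∀ u ∈ Ioo (-d) d, HasDerivAt φ (deriv φ u) u ∧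
      HasDerivAt (deriv φ) (κ ^ 2 * φ u) u := by
    intro u hu
    have hmem : Icc (-d) d ∈ 𝓝 u := Icc_mem_nhds hu.1 hu.2
    obtain ⟨V, hVsub, hVopen, hVu⟩ := mem_nhds_iff.mp hmem
    have hCV : ContDiffOn ℝ 2 φ V := hC2.mono hVsub
    have hφdiff : DifferentiableAt ℝ φ u :=
      ((hCV.differentiableOn (by norm_num)).differentiableAt (hVopen.mem_nhds hVu))
    have hd1 : ContDiffOn ℝ 1 (deriv φ) V := hCV.deriv_of_isOpen hVopen (by norm_num)
    have hφ'diff : DifferentiableAt ℝ (deriv φ) u :=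
      ((hd1.differentiableOn (by norm_num)).differentiableAt (hVopen.mem_nhds hVu))
    refine ⟨hφdiff.hasDerivAt, ?_⟩
    have := hφ'diff.hasDerivAt
    rwa [hode u hu] at this
  -- Wronskians with e^{∓κu}
  set W₁ : ℝ → ℝ := fun u => (deriv φ u + κ * φ u) * Real.exp (-(κ * u)) with hW₁def
  set W₂ : ℝ → ℝ := fun u => (deriv φ u - κ * φ u) * Real.exp (κ * u) with hW₂def
  have hW₁ : ∀ u ∈ Ioo (-d) d, HasDerivAt W₁ 0 u := by
    intro u hu
    obtain ⟨h1, h2⟩ := hreg u hu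
    have he : HasDerivAt (fun v => Real.exp (-(κ * v))) (Real.exp (-(κ * u)) * -κ) u :=
      HasDerivAt.exp (by have h := ((hasDerivAt_id u).const_mul κ).neg; exact h.congr_deriv (by ring))
    have := (h2.add (h1.const_mul κ)).mul he
    refine this.congr_deriv ?_
    simp only [Pi.add_apply]; ring
  have hW₂ : ∀ u ∈ Ioo (-d) d, HasDerivAt W₂ 0 u := by
    intro u hu
    obtain ⟨h1, h2⟩ := hreg u hu
    have he : HasDerivAt (fun v => Real.exp (κ * v)) (Real.exp (κ * u) * κ) u :=
      HasDerivAt.exp (by simpa using (hasDerivAt_id u).const_mul κ)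
    have := (h2.sub (h1.const_mul κ)).mul he
    refine this.congr_deriv ?_
    simp only [Pi.sub_apply]; ring
  have h0mem : (0:ℝ) ∈ Ioo (-d) d := ⟨by linarith, hd⟩
  set c₁ : ℝ := W₁ 0 with hc₁def
  set c₂ : ℝ := W₂ 0 with hc₂def
  set h : ℝ → ℝ := fun u => (c₁ * Real.exp (κ * u) - c₂ * Real.exp (-(κ * u))) / (2 * κ)
    with hhdef
  -- representation on the open interval
  have hrepO : ∀ u ∈ Ioo (-d) d, φ u = h u := by
    intro u hu
    have w1 : (deriv φ u + κ * φ u) * Real.exp (-(κ * u)) = c₁ :=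
      const_of_hasDerivAt_zero hW₁ u hu 0 h0mem
    have w2 : (deriv φ u - κ * φ u) * Real.exp (κ * u) = c₂ :=
      const_of_hasDerivAt_zero hW₂ u hu 0 h0mem
    have hEE : Real.exp (-(κ * u)) * Real.exp (κ * u) = 1 := by
      rw [← Real.exp_add]; simp
    have hnum : c₁ * Real.exp (κ * u) - c₂ * Real.exp (-(κ * u)) = 2 * κ * φ u := by
      rw [← w1, ← w2]
      linear_combination (2 * κ * φ u) * hEE
    rw [hhdef]
    simp only
    rw [hnum]
    field_simp
  -- extension to the closed interval
  have hcont := hC2.continuousOn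
  have hhcont : Continuous h := by fun_prop
  have hrep : ∀ u ∈ Icc (-d) d, φ u = h u := by
    intro u hu
    by_cases hu' : u ∈ Ioo (-d) d
    · exact hrepO u hu'
    · have hcl : u ∈ closure (Ioo (-d) d) := by
        rw [closure_Ioo (by linarith : (-d : ℝ) ≠ d)]
        exact hu
      haveI hne : (𝓝[Ioo (-d) d] u).NeBot := mem_closure_iff_nhdsWithin_neBot.mp hcl
      have t1 : Filter.Tendsto φ (𝓝[Ioo (-d) d] u) (𝓝 (φ u)) :=
        (hcont u hu).mono Ioo_subset_Icc_self
      have t2 : Filter.Tendsto h (𝓝[Ioo (-d) d] u) (𝓝 (h u)) :=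
        hhcont.continuousWithinAt
      have t1' : Filter.Tendsto h (𝓝[Ioo (-d) d] u) (𝓝 (φ u)) :=
        t1.congr' (Filter.eventually_iff_exists_mem.mpr
          ⟨Ioo (-d) d, self_mem_nhdsWithin, fun x hx => hrepO x hx⟩)
      exact tendsto_nhds_unique t1' t2
  have hmemd : d ∈ Icc (-d) d := ⟨by linarith, le_refl d⟩
  have hmemnd : -d ∈ Icc (-d) d := ⟨le_refl _, by linarith⟩
  -- derivatives of h
  have hder : ∀ u : ℝ, HasDerivAt h
      ((c₁ * (Real.exp (κ * u) * κ) - c₂ * (Real.exp (-(κ * u)) * -κ)) / (2 * κ)) u := by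
    intro u
    have he1 : HasDerivAt (fun v => Real.exp (κ * v)) (Real.exp (κ * u) * κ) u :=
      HasDerivAt.exp (by simpa using (hasDerivAt_id u).const_mul κ)
    have he2 : HasDerivAt (fun v => Real.exp (-(κ * v))) (Real.exp (-(κ * u)) * -κ) u :=
      HasDerivAt.exp (by have h := ((hasDerivAt_id u).const_mul κ).neg; exact h.congr_deriv (by ring))
    exact ((he1.const_mul c₁).sub (he2.const_mul c₂)).div_const (2 * κ)
  have hdw : ∀ u ∈ Icc (-d) d, derivWithin φ (Icc (-d) d) u =
      (c₁ * (Real.exp (κ * u) * κ) - c₂ * (Real.exp (-(κ * u)) * -κ)) / (2 * κ) := by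
    intro u hu
    rw [derivWithin_congr (fun x hx => hrep x hx) (hrep u hu)]
    exact ((hder u).hasDerivWithinAt).derivWithin (hUD u hu)
  -- boundary equations
  set E : ℝ := Real.exp (κ * d) with hEdef
  set E' : ℝ := Real.exp (-(κ * d)) with hE'def
  have hE'd : Real.exp (κ * -d) = E' := by rw [hE'def]; ring_nf
  have hEd : Real.exp (-(κ * -d)) = E := by rw [hEdef]; ring_nf
  have hbc1' : c₁ * (κ + α) * E + c₂ * (κ - α) * E' = 0 := by
    rw [hdw d hmemd, hrep d hmemd] at hbc1
    simp only [hhdef] at hbc1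
    field_simp at hbc1
    linarith [hbc1]
  have hbc2' : c₁ * (α - κ) * E' - c₂ * (α + κ) * E = 0 := by
    rw [hdw (-d) hmemnd, hrep (-d) hmemnd] at hbc2
    simp only [hhdef, hE'd, hEd] at hbc2
    field_simp at hbc2
    linarith [hbc2]
  -- nontriviality
  have hc : ¬ (c₁ = 0 ∧ c₂ = 0) := by
    rintro ⟨r1, r2⟩
    apply hu₀ne
    rw [hrep u₀ hu₀, hhdef]
    simp [r1, r2]
  -- P, Q and the determinant argument
  set P : ℝ := (κ + α) * E with hPdef
  set Q : ℝ := (κ - α) * E' with hQdef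
  have e1 : c₁ * P + c₂ * Q = 0 := by rw [hPdef, hQdef]; linarith [hbc1']
  have e2 : c₁ * Q + c₂ * P = 0 := by rw [hPdef, hQdef]; nlinarith [hbc2']
  have hfE : P - Q = 0 → fE d α κ = 0 := by
    intro hpq
    rw [hPdef, hQdef, hEdef, hE'def] at hpq
    unfold fE
    rw [Real.sinh_eq, Real.cosh_eq]
    linarith [hpq]
  have hgO : P + Q = 0 → gO d α κ = 0 := by
    intro hpq
    rw [hPdef, hQdef, hEdef, hE'def] at hpq
    unfold gO
    rw [Real.sinh_eq, Real.cosh_eq]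
    linarith [hpq]
  by_cases hsq : c₁ ^ 2 = c₂ ^ 2
  · have : (c₁ - c₂) * (c₁ + c₂) = 0 := by nlinarith [hsq]
    rcases mul_eq_zero.mp this with h12 | h12
    · -- c₁ = c₂ ≠ 0
      have hc₁₂ : c₁ = c₂ := by linarith
      have hc₁ne : c₁ ≠ 0 := by
        intro hc0
        exact hc ⟨hc0, by rw [← hc₁₂]; exact hc0⟩
      right
      apply hgO
      have := e1
      rw [← hc₁₂] at this
      have : c₁ * (P + Q) = 0 := by linarith [this]
      exact (mul_eq_zero.mp this).resolve_left hc₁ne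
    · have hc₁₂ : c₁ = -c₂ := by linarith
      have hc₂ne : c₂ ≠ 0 := by
        intro hc0
        exact hc ⟨by rw [hc₁₂, hc0]; ring, hc0⟩
      left
      apply hfE
      have := e1
      rw [hc₁₂] at this
      have : c₂ * (P - Q) = 0 := by linarith [this]
      have := (mul_eq_zero.mp this).resolve_left hc₂ne
      linarith
  · -- c₁² ≠ c₂² : then P = 0 and Q = 0
    have hP : (c₁ ^ 2 - c₂ ^ 2) * P = 0 := by linear_combination c₁ * e1 - c₂ * e2
    have hQ : (c₁ ^ 2 - c₂ ^ 2) * Q = 0 := by linear_combination c₁ * e2 - c₂ * e1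
    have hPz : P = 0 := by
      rcases mul_eq_zero.mp hP with h' | h'
      · exact absurd (by linarith : c₁ ^ 2 = c₂ ^ 2) hsq
      · exact h'
    have hQz : Q = 0 := by
      rcases mul_eq_zero.mp hQ with h' | h'
      · exact absurd (by linarith : c₁ ^ 2 = c₂ ^ 2) hsq
      · exact h'
    exact Or.inl (hfE (by rw [hPz, hQz]; ring))

lemma negEig_char {d α : ℝ} (hd : 0 < d) :
    negEigSet d α = {κ : ℝ | 0 < κ ∧ (fE d α κ = 0 ∨ gO d α κ = 0)} := by
  ext κ
  constructor
  · rintro ⟨hκ, φ, hφ⟩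
    exact ⟨hκ, fE_or_gO_of_robin hd hκ hφ⟩
  · rintro ⟨hκ, hf | hg⟩
    · exact ⟨hκ, _, isRobin_of_fE hd hκ hf⟩
    · exact ⟨hκ, _, isRobin_of_gO hd hκ hg⟩

/-- The number of negative eigenvalues of the symmetric Robin Laplacian on
`(−d,d)` is `0` if `α ≥ 0`, `1` if `−1 ≤ αd < 0`, and `2` if `αd < −1`. -/
theorem number_of_negative_robin_eigenvalues
    (d α : ℝ) (hd : 0 < d) :
    (negEigSet d α).Finite ∧
    (0 ≤ α → (negEigSet d α).ncard = 0) ∧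
    (-1 ≤ α * d → α * d < 0 → (negEigSet d α).ncard = 1) ∧
    (α * d < -1 → (negEigSet d α).ncard = 2) := by
  rw [negEig_char hd]
  rcases le_or_gt 0 α with hα | hα
  · -- no eigenvalues
    have he : {κ : ℝ | 0 < κ ∧ (fE d α κ = 0 ∨ gO d α κ = 0)} = ∅ := by
      ext κ
      simp only [mem_setOf_eq, mem_empty_iff_false, iff_false, not_and]
      intro hκ
      push_neg
      exact ⟨(fE_pos hd hα hκ).ne', (gO_pos hd (by nlinarith) hκ).ne'⟩
    rw [he]
    refine ⟨finite_empty, fun _ => by simp, fun h1 h2 => ?_, fun h3 => ?_⟩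
    · nlinarith
    · nlinarith
  · obtain ⟨κf, hκf, hκffE⟩ := fE_exists_zero hd hα
    rcases le_or_gt (-1) (α * d) with hαd | hαd
    · -- exactly one
      have hset : {κ : ℝ | 0 < κ ∧ (fE d α κ = 0 ∨ gO d α κ = 0)} = {κf} := by
        ext κ
        simp only [mem_setOf_eq, mem_singleton_iff]
        constructor
        · rintro ⟨hκ, hf | hg⟩
          · exact fE_zero_unique hd hκ hκf hf hκffE
          · exact absurd hg (gO_pos hd hαd hκ).ne'
        · rintro rfl
          exact ⟨hκf, Or.inl hκffE⟩
      rw [hset]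
      exact ⟨finite_singleton _, fun h0 => by nlinarith, fun _ _ => ncard_singleton _,
        fun h3 => by nlinarith⟩
    · -- exactly two
      obtain ⟨κg, hκg, hκggO⟩ := gO_exists_zero hd hαd
      have hne : κf ≠ κg := by
        intro heq
        rw [heq] at hκffE
        have h1 : fE d α κg - gO d α κg =
            (κg - α) * (Real.sinh (κg * d) - Real.cosh (κg * d)) := by
          unfold fE gO; ring
        have h2 : Real.sinh (κg * d) - Real.cosh (κg * d) = -Real.exp (-(κg * d)) :=
          Real.sinh_sub_cosh _
        have h3 : 0 < Real.exp (-(κg * d)) := Real.exp_pos _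
        rw [hκffE, hκggO, h2] at h1
        have h4 : κg - α > 0 := by linarith
        nlinarith
      have hset : {κ : ℝ | 0 < κ ∧ (fE d α κ = 0 ∨ gO d α κ = 0)} = {κf, κg} := by
        ext κ
        simp only [mem_setOf_eq, mem_insert_iff, mem_singleton_iff]
        constructor
        · rintro ⟨hκ, hf | hg⟩
          · exact Or.inl (fE_zero_unique hd hκ hκf hf hκffE)
          · exact Or.inr (gO_zero_unique hd hκ hκg hg hκggO)
        · rintro (rfl | rfl)
          · exact ⟨hκf, Or.inl hκffE⟩
          · exact ⟨hκg, Or.inr hκggO⟩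
      rw [hset]
      exact ⟨(finite_singleton κg).insert κf, fun h0 => by nlinarith,
        fun h1 h2 => by nlinarith, fun _ => ncard_pair hne⟩
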